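/- Gaussian example: if X ~ N(0, σ_X²) and N ~ N(0, σ_N²) are independent, then for -σ_N²/σ_X² < α < 0, the negative-order Sibson mutual information satisfies I_α(X, X+N) = -(1/2)·log(1 + α·σ_X²/σ_N²). -/

import Mathlib

open Real MeasureTheory

/-- Gaussian example: if `X ~ N(0, σ_X²)` and `N ~ N(0, σ_N²)` are independent
and `Y = X + N`, then for `-σ_N²/σ_X² < α < 0`,
`I_α(X, X+N) = -(1/2)·log(1 + α·σ_X²/σ_N²)`, where
`I_α(X,Y) = (α/(1-α)) · log ∫ (∫ p_{Y|X=x}(y)^α p_X(x) dx)^{1/α} dy`. -/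
theorem sibson_neg_order_gaussian
    (σX σN : ℝ) (hσX : 0 < σX) (hσN : 0 < σN)
    (α : ℝ) (hα0 : α < 0) (hαlb : -(σN ^ 2 / σX ^ 2) < α)
    (gX gN : ℝ → ℝ)
    (hgX : ∀ x, gX x = (1 / Real.sqrt (2 * Real.pi * σX ^ 2)) *
      Real.exp (-(x ^ 2) / (2 * σX ^ 2)))
    (hgN : ∀ x, gN x = (1 / Real.sqrt (2 * Real.pi * σN ^ 2)) *
      Real.exp (-(x ^ 2) / (2 * σN ^ 2))) :
    (α / (1 - α)) *
        Real.log (∫ y : ℝ, (∫ x : ℝ, gN (y - x) ^ α * gX x) ^ (1 / α))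
      = -(1 / 2) * Real.log (1 + α * σX ^ 2 / σN ^ 2) := by
  have hs : (0:ℝ) < σX ^ 2 := by positivity
  have ht : (0:ℝ) < σN ^ 2 := by positivity
  set s := σX ^ 2 with hs_def
  set t := σN ^ 2 with ht_def
  have hu : 0 < α * s + t := by
    have h1 : -(t / s) * s < α * s := by
      exact mul_lt_mul_of_pos_right hαlb hs
    have h2 : -(t / s) * s = -t := by field_simp
    nlinarith
  set u := α * s + t with hu_def
  have hπ : (0:ℝ) < Real.pi := Real.pi_pos
  set cN : ℝ := 1 / Real.sqrt (2 * Real.pi * t) with hcN_def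
  set cX : ℝ := 1 / Real.sqrt (2 * Real.pi * s) with hcX_def
  have hcN : 0 < cN := by positivity
  have hcX : 0 < cX := by positivity
  set S : ℝ := u / (s * t) with hS_def
  have hSpos : 0 < S := by positivity
  set D : ℝ := cN ^ α * cX * Real.sqrt (Real.pi / (S / 2)) with hD_def
  have hD : 0 < D := by positivity
  set β : ℝ := -α / (2 * u) with hβ_def
  have hα0' : α ≠ 0 := ne_of_lt hα0
  -- inner integral
  have hinner : ∀ y : ℝ, (∫ x : ℝ, gN (y - x) ^ α * gX x) = D * Real.exp (β * y ^ 2) := by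
    intro y
    have hpt : ∀ x : ℝ, gN (y - x) ^ α * gX x
        = (cN ^ α * cX * Real.exp (β * y ^ 2)) *
          Real.exp (-(S / 2) * (x - (α * s / u) * y) ^ 2) := by
      intro x
      rw [hgN, hgX]
      rw [Real.mul_rpow (le_of_lt hcN) (Real.exp_pos _).le]
      rw [← Real.exp_mul]
      have hexp : -(y - x) ^ 2 / (2 * t) * α + -(x ^ 2) / (2 * s)
          = β * y ^ 2 + -(S / 2) * (x - (α * s / u) * y) ^ 2 := by
        have hu' : α * s + t ≠ 0 := ne_of_gt hu
        rw [hβ_def, hS_def, hu_def]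
        field_simp
        ring
      calc cN ^ α * Real.exp (-(y - x) ^ 2 / (2 * t) * α) * (cX * Real.exp (-(x ^ 2) / (2 * s)))
          = (cN ^ α * cX) * Real.exp (-(y - x) ^ 2 / (2 * t) * α + -(x ^ 2) / (2 * s)) := by
            rw [Real.exp_add]; ring
        _ = (cN ^ α * cX * Real.exp (β * y ^ 2)) *
            Real.exp (-(S / 2) * (x - (α * s / u) * y) ^ 2) := by
            rw [hexp, Real.exp_add]; ring
    simp_rw [hpt]
    rw [MeasureTheory.integral_const_mul]
    have hshift : (∫ x : ℝ, Real.exp (-(S / 2) * (x - (α * s / u) * y) ^ 2))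
        = ∫ x : ℝ, Real.exp (-(S / 2) * x ^ 2) :=
      integral_sub_right_eq_self (fun x => Real.exp (-(S / 2) * x ^ 2)) ((α * s / u) * y)
    rw [hshift, integral_gaussian (S / 2), hD_def]
    ring
  simp_rw [hinner]
  -- outer integral
  have hβα : β * (1 / α) = -(1 / (2 * u)) := by
    rw [hβ_def]; field_simp
  have houter : ∀ y : ℝ, (D * Real.exp (β * y ^ 2)) ^ (1 / α)
      = D ^ (1 / α) * Real.exp (-(1 / (2 * u)) * y ^ 2) := by
    intro y
    rw [Real.mul_rpow hD.le (Real.exp_pos _).le, ← Real.exp_mul]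
    congr 1
    rw [show β * y ^ 2 * (1 / α) = β * (1 / α) * y ^ 2 by ring, hβα]
  simp_rw [houter]
  rw [MeasureTheory.integral_const_mul, integral_gaussian (1 / (2 * u))]
  -- logs
  have h2u : Real.pi / (1 / (2 * u)) = 2 * Real.pi * u := by field_simp
  rw [h2u]
  have hrpos : 0 < D ^ (1 / α) := Real.rpow_pos_of_pos hD _
  have hsq : (0:ℝ) < Real.sqrt (2 * Real.pi * u) := by positivity
  rw [Real.log_mul (ne_of_gt hrpos) (ne_of_gt hsq), Real.log_rpow hD,
    Real.log_sqrt (by positivity)]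
  have hlogD : Real.log D = α * Real.log cN + Real.log cX
      + (1 / 2) * Real.log (Real.pi / (S / 2)) := by
    rw [hD_def, Real.log_mul (by positivity) (by positivity),
      Real.log_mul (by positivity) (ne_of_gt hcX), Real.log_rpow hcN,
      Real.log_sqrt (by positivity)]
    ring
  have hlogcN : Real.log cN = -(1 / 2) * (Real.log (2 * Real.pi) + Real.log t) := by
    rw [hcN_def, one_div, Real.log_inv, Real.log_sqrt (by positivity),
      Real.log_mul (by positivity) (ne_of_gt ht)]
    ring
  have hlogcX : Real.log cX = -(1 / 2) * (Real.log (2 * Real.pi) + Real.log s) := by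
    rw [hcX_def, one_div, Real.log_inv, Real.log_sqrt (by positivity),
      Real.log_mul (by positivity) (ne_of_gt hs)]
    ring
  have hlogS : Real.log (Real.pi / (S / 2))
      = Real.log (2 * Real.pi) + Real.log s + Real.log t - Real.log u := by
    have : Real.pi / (S / 2) = 2 * Real.pi * s * t / u := by
      rw [hS_def]; field_simp
    rw [this, Real.log_div (by positivity) (ne_of_gt hu),
      Real.log_mul (by positivity) (ne_of_gt ht),
      Real.log_mul (by positivity) (ne_of_gt hs),
      Real.log_mul (by positivity) (ne_of_gt hπ)]
  have hlog2πu : Real.log (2 * Real.pi * u) = Real.log (2 * Real.pi) + Real.log u := by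
    rw [Real.log_mul (by positivity) (ne_of_gt hu)]
  have hRHS : (1 : ℝ) + α * s / t = u / t := by
    rw [hu_def]; field_simp; ring
  rw [hRHS, Real.log_div (ne_of_gt hu) (ne_of_gt ht), hlogD, hlogcN, hlogcX, hlogS, hlog2πu]
  have h1α : (1 : ℝ) - α ≠ 0 := by intro h; nlinarith
  field_simp
  ring
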